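/- Fix α, β ∈ (0,1) and τ_Q > 0, and let c = αβ + (1−α)(1−β). For σ_Z ≥ 0 write σ_α = √(α² + (1−α)² + σ_Z²). Then the mean admitted type m(σ_Z) = (α/σ_α)·H(τ_Q σ_α / c) is strictly decreasing in σ_Z on [0,∞) and m(σ_Z) → α τ_Q / c as σ_Z → ∞; the mean admitted soft skill ((1−α)/σ_α)·H(τ_Q σ_α / c) is strictly decreasing in σ_Z with limit (1−α) τ_Q / c as σ_Z → ∞; and the admitted fraction 1 − Φ(τ_Q σ_α / c) is strictly decreasing in σ_Z. -/

import Mathlib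

open MeasureTheory Real Set Filter

/-- Standard normal pdf. -/
noncomputable def phi (x : ℝ) : ℝ := Real.exp (-x ^ 2 / 2) / Real.sqrt (2 * Real.pi)

/-- Standard normal cdf. -/
noncomputable def Phi (x : ℝ) : ℝ := ∫ y in Set.Iic x, phi y

/-- Standard normal hazard rate. -/
noncomputable def Haz (x : ℝ) : ℝ := phi x / (1 - Phi x)

lemma phi_pos (x : ℝ) : 0 < phi x := by
  have h : 0 < Real.sqrt (2 * Real.pi) := Real.sqrt_pos.2 (by positivity)
  exact div_pos (Real.exp_pos _) h

lemma phi_eq (x : ℝ) : phi x = (Real.sqrt (2 * Real.pi))⁻¹ * Real.exp (-(1/2) * x ^ 2) := by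
  unfold phi; rw [inv_mul_eq_div]; ring_nf

lemma integrable_phi : Integrable phi := by
  have : Integrable (fun x : ℝ => Real.exp (-(1/2) * x ^ 2)) := integrable_exp_neg_mul_sq (by norm_num)
  have := this.const_mul (Real.sqrt (2 * Real.pi))⁻¹
  exact this.congr (by filter_upwards with x using (phi_eq x).symm)

lemma integral_phi : ∫ x, phi x = 1 := by
  have h : ∫ x : ℝ, Real.exp (-(1/2) * x ^ 2) = Real.sqrt (Real.pi / (1/2)) := integral_gaussian _
  have h2 : ∫ x, phi x = (Real.sqrt (2 * Real.pi))⁻¹ * ∫ x : ℝ, Real.exp (-(1/2) * x ^ 2) := by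
    rw [← MeasureTheory.integral_const_mul]; congr 1; ext x; exact phi_eq x
  rw [h2, h]
  have : Real.pi / (1/2) = 2 * Real.pi := by ring
  rw [this, inv_mul_cancel₀ (ne_of_gt (Real.sqrt_pos.2 (by positivity)))]

lemma one_sub_Phi (x : ℝ) : 1 - Phi x = ∫ y in Set.Ioi x, phi y := by
  have := intervalIntegral.integral_Iic_add_Ioi (μ := volume) (b := x) integrable_phi.integrableOn integrable_phi.integrableOn
  rw [integral_phi] at this
  unfold Phi; linarith

lemma one_sub_Phi_pos (x : ℝ) : 0 < 1 - Phi x := by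
  rw [one_sub_Phi]
  rw [setIntegral_pos_iff_support_of_nonneg_ae
    (Filter.Eventually.of_forall (fun y => (phi_pos y).le)) integrable_phi.integrableOn]
  have : Function.support phi = Set.univ := by
    ext y; simp [Function.mem_support, (phi_pos y).ne']
  rw [this, Set.univ_inter]
  simp

lemma continuous_phi : Continuous phi := by
  unfold phi; fun_prop

lemma hasDerivAt_phi (x : ℝ) : HasDerivAt phi (-x * phi x) x := by
  have h1 : HasDerivAt (fun y : ℝ => -y ^ 2 / 2) (-x) x := by
    have := ((hasDerivAt_pow 2 x).neg).div_const 2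
    simpa using this.congr_deriv (by ring)
  have h2 : HasDerivAt (fun y : ℝ => Real.exp (-y ^ 2 / 2)) (Real.exp (-x ^ 2 / 2) * (-x)) x :=
    (Real.hasDerivAt_exp _).comp x h1
  have h3 := h2.div_const (Real.sqrt (2 * Real.pi))
  refine h3.congr_deriv ?_
  unfold phi; ring

lemma Phi_sub_Phi (a b : ℝ) : Phi b - Phi a = ∫ y in a..b, phi y := by
  exact intervalIntegral.integral_Iic_sub_Iic integrable_phi.integrableOn integrable_phi.integrableOn

lemma hasDerivAt_Phi (x : ℝ) : HasDerivAt Phi (phi x) x := by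
  have h : HasDerivAt (fun u => ∫ y in (0:ℝ)..u, phi y) (phi x) x :=
    intervalIntegral.integral_hasDerivAt_right
      (integrable_phi.intervalIntegrable)
      (continuous_phi.stronglyMeasurableAtFilter _ _)
      continuous_phi.continuousAt
  have : Phi = fun u => Phi 0 + ∫ y in (0:ℝ)..u, phi y := by
    funext u; rw [← Phi_sub_Phi 0 u]; ring
  rw [this]
  simpa using (h.const_add (Phi 0))

lemma tendsto_one_sub_Phi : Tendsto (fun x => 1 - Phi x) atTop (nhds 0) := by
  have h : Tendsto (fun x : ℝ => ∫ y in (0:ℝ)..x, phi y) atTop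
      (nhds (∫ y in Set.Ioi (0:ℝ), phi y)) :=
    intervalIntegral_tendsto_integral_Ioi 0 integrable_phi.integrableOn tendsto_id
  have h2 : Tendsto (fun x : ℝ => (1 - Phi 0) - ∫ y in (0:ℝ)..x, phi y) atTop
      (nhds ((1 - Phi 0) - ∫ y in Set.Ioi (0:ℝ), phi y)) := (tendsto_const_nhds.sub h)
  have e1 : (1 : ℝ) - Phi 0 = ∫ y in Set.Ioi (0:ℝ), phi y := one_sub_Phi 0
  rw [← e1, sub_self] at h2
  refine h2.congr (fun x => ?_)
  rw [← Phi_sub_Phi 0 x]; ring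

lemma tendsto_phi : Tendsto phi atTop (nhds 0) := by
  have h : Tendsto (fun x : ℝ => -x ^ 2 / 2) atTop atBot := by
    apply Filter.Tendsto.atBot_div_const (by norm_num)
    exact tendsto_neg_atBot_iff.2 (tendsto_pow_atTop (by norm_num))
  have := (Real.tendsto_exp_atBot).comp h
  have h2 := this.div_const (Real.sqrt (2 * Real.pi))
  rw [show (0:ℝ) = 0 / Real.sqrt (2 * Real.pi) by simp]
  exact h2.congr fun x => by simp [phi, Function.comp]

lemma tendsto_mul_phi : Tendsto (fun x => x * phi x) atTop (nhds 0) := by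
  have hb : ∀ x : ℝ, 1 ≤ x → x * phi x ≤ 2 / x / Real.sqrt (2 * Real.pi) := by
    intro x hx
    have hx0 : (0:ℝ) < x := by linarith
    have he : x ^ 2 / 2 < Real.exp (x ^ 2 / 2) := by
      have := Real.add_one_le_exp (x ^ 2 / 2); nlinarith [sq_nonneg x]
    have h1 : Real.exp (-x ^ 2 / 2) ≤ 2 / x ^ 2 := by
      rw [neg_div, Real.exp_neg, inv_le_comm₀ (Real.exp_pos _) (by positivity)]
      calc (2 / x ^ 2)⁻¹ = x ^ 2 / 2 := by field_simp
        _ ≤ Real.exp (x ^ 2 / 2) := he.le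
    have key : x * Real.exp (-x ^ 2 / 2) ≤ 2 / x :=
      calc x * Real.exp (-x ^ 2 / 2) ≤ x * (2 / x ^ 2) :=
            mul_le_mul_of_nonneg_left h1 hx0.le
        _ = 2 / x := by field_simp
    have : x * phi x = x * Real.exp (-x ^ 2 / 2) / Real.sqrt (2 * Real.pi) := by
      unfold phi; ring
    rw [this]
    gcongr
  have hlim : Tendsto (fun x : ℝ => 2 / x / Real.sqrt (2 * Real.pi)) atTop (nhds 0) := by
    have h1 : Tendsto (fun x : ℝ => 2 / x) atTop (nhds 0) :=
      Tendsto.div_atTop tendsto_const_nhds tendsto_id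
    have := h1.div_const (Real.sqrt (2 * Real.pi))
    simpa using this
  refine tendsto_of_tendsto_of_tendsto_of_le_of_le' tendsto_const_nhds hlim ?_ ?_
  · filter_upwards [eventually_ge_atTop (1:ℝ)] with x hx
    have := phi_pos x; nlinarith
  · filter_upwards [eventually_ge_atTop (1:ℝ)] with x hx using hb x hx

lemma continuous_Phi : Continuous Phi :=
  continuous_iff_continuousAt.2 fun x => (hasDerivAt_Phi x).continuousAt

noncomputable def mL (x : ℝ) : ℝ := (1 - Phi x) - x * phi x / (1 + x ^ 2)
noncomputable def mU (x : ℝ) : ℝ := (1 - Phi x) - phi x / x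

lemma one_add_sq_pos (x : ℝ) : (0:ℝ) < 1 + x ^ 2 := by positivity

lemma hasDerivAt_mL (x : ℝ) :
    HasDerivAt mL (-(2 * phi x) / (1 + x ^ 2) ^ 2) x := by
  have hden : (1 + x ^ 2 : ℝ) ≠ 0 := (one_add_sq_pos x).ne'
  have h1 : HasDerivAt (fun y : ℝ => 1 - Phi y) (-phi x) x := by
    simpa using (hasDerivAt_Phi x).const_sub 1
  have h2 : HasDerivAt (fun y : ℝ => y * phi y) (1 * phi x + x * (-x * phi x)) x :=
    (hasDerivAt_id x).mul (hasDerivAt_phi x)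
  have h3 : HasDerivAt (fun y : ℝ => 1 + y ^ 2) (0 + 2 * x) x := by
    simpa using (hasDerivAt_pow 2 x).const_add (1:ℝ)
  have h4 := h2.div h3 hden
  have h5 := h1.sub h4
  refine h5.congr_deriv ?_
  field_simp
  ring
lemma strictAnti_mL : StrictAnti mL := by
  have : ∀ x, deriv mL x < 0 := by
    intro x
    rw [(hasDerivAt_mL x).deriv]
    have := phi_pos x
    have := one_add_sq_pos x
    apply div_neg_of_neg_of_pos <;> nlinarith
  exact strictAnti_of_deriv_neg this

lemma tendsto_mL : Tendsto mL atTop (nhds 0) := by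
  have h2 : Tendsto (fun x => x * phi x / (1 + x ^ 2)) atTop (nhds 0) := by
    refine tendsto_of_tendsto_of_tendsto_of_le_of_le' tendsto_const_nhds tendsto_mul_phi ?_ ?_
    · filter_upwards [eventually_ge_atTop (0:ℝ)] with x hx
      have := phi_pos x; positivity
    · filter_upwards [eventually_ge_atTop (0:ℝ)] with x hx
      have h := phi_pos x
      rw [div_le_iff₀ (one_add_sq_pos x)]
      nlinarith [sq_nonneg x, mul_nonneg hx h.le]
  have := tendsto_one_sub_Phi.sub h2
  have e : mL = fun x => 1 - Phi x - x * phi x / (1 + x ^ 2) := rfl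
  rw [e]; simpa using this

lemma mills_lower (x : ℝ) : x * phi x / (1 + x ^ 2) < 1 - Phi x := by
  have h1 : mL (x + 1) < mL x := strictAnti_mL (by linarith)
  have h2 : (0:ℝ) ≤ mL (x + 1) := by
    refine le_of_tendsto tendsto_mL ?_
    filter_upwards [eventually_ge_atTop (x + 1)] with y hy
    exact strictAnti_mL.antitone hy
  have : 0 < mL x := lt_of_le_of_lt h2 h1
  unfold mL at this; linarith

lemma hasDerivAt_mU {x : ℝ} (hx : x ≠ 0) :
    HasDerivAt mU (-phi x + phi x * (1 + x ^ 2) / x ^ 2) x := by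
  have h1 : HasDerivAt (fun y : ℝ => 1 - Phi y) (-phi x) x := by
    simpa using (hasDerivAt_Phi x).const_sub 1
  have h2 := (hasDerivAt_phi x).div (hasDerivAt_id x) hx
  have h5 := h1.sub h2
  refine h5.congr_deriv ?_
  simp only [id]
  field_simp
  ring

lemma strictMonoOn_mU : StrictMonoOn mU (Set.Ioi 0) := by
  refine strictMonoOn_of_deriv_pos (convex_Ioi 0) ?_ ?_
  · exact ContinuousOn.sub (continuous_const.sub continuous_Phi).continuousOn
      (ContinuousOn.div continuous_phi.continuousOn continuousOn_id (fun x hx => ne_of_gt hx))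
  · intro x hx
    rw [interior_Ioi] at hx
    have hx' : (0:ℝ) < x := hx
    rw [(hasDerivAt_mU (ne_of_gt hx')).deriv]
    have h := phi_pos x
    have hx2 : (0:ℝ) < x ^ 2 := pow_pos hx' 2
    rw [show -phi x + phi x * (1 + x ^ 2) / x ^ 2 = phi x / x ^ 2 by field_simp; ring]
    positivity

lemma tendsto_mU : Tendsto mU atTop (nhds 0) := by
  have h2 : Tendsto (fun x => phi x / x) atTop (nhds 0) := by
    refine tendsto_of_tendsto_of_tendsto_of_le_of_le' tendsto_const_nhds tendsto_phi ?_ ?_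
    · filter_upwards [eventually_ge_atTop (1:ℝ)] with x hx
      have := phi_pos x; positivity
    · filter_upwards [eventually_ge_atTop (1:ℝ)] with x hx
      have h := phi_pos x
      rw [div_le_iff₀ (by linarith : (0:ℝ) < x)]
      nlinarith
  have := tendsto_one_sub_Phi.sub h2
  have e : mU = fun x => 1 - Phi x - phi x / x := rfl
  rw [e]; simpa using this

lemma mills_upper {x : ℝ} (hx : 0 < x) : 1 - Phi x < phi x / x := by
  have h1 : mU x < mU (x + 1) := strictMonoOn_mU hx (by simp; linarith) (by linarith)
  have h2 : mU (x + 1) ≤ 0 := by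
    refine ge_of_tendsto tendsto_mU ?_
    filter_upwards [eventually_ge_atTop (x + 1)] with y hy
    exact strictMonoOn_mU.monotoneOn (by simp; linarith) (by simp; linarith) hy
  have : mU x < 0 := lt_of_lt_of_le h1 h2
  unfold mU at this; linarith

noncomputable def gM (x : ℝ) : ℝ := x * (1 - Phi x) / phi x

lemma hasDerivAt_gM (x : ℝ) :
    HasDerivAt gM (((1 + x ^ 2) * (1 - Phi x) - x * phi x) / phi x) x := by
  have hp := phi_pos x
  have h1 : HasDerivAt (fun y : ℝ => y * (1 - Phi y)) (1 * (1 - Phi x) + x * (-phi x)) x :=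
    (hasDerivAt_id x).mul (by simpa using (hasDerivAt_Phi x).const_sub 1)
  have h2 := h1.div (hasDerivAt_phi x) hp.ne'
  refine h2.congr_deriv ?_
  field_simp
  ring

lemma strictMono_gM : StrictMono gM := by
  refine strictMono_of_deriv_pos fun x => ?_
  rw [(hasDerivAt_gM x).deriv]
  have hp := phi_pos x
  have hl := mills_lower x
  apply div_pos ?_ hp
  have h1 := one_add_sq_pos x
  rw [div_lt_iff₀ h1] at hl
  nlinarith

lemma gM_pos {x : ℝ} (hx : 0 < x) : 0 < gM x := by
  have := one_sub_Phi_pos x; have := phi_pos x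
  unfold gM; positivity

lemma gM_lt_one {x : ℝ} (hx : 0 < x) : gM x < 1 := by
  have hu := mills_upper hx
  have hp := phi_pos x
  unfold gM
  rw [div_lt_one hp]
  rw [lt_div_iff₀ hx] at hu
  linarith [mul_comm x (1 - Phi x)]

lemma lt_gM {x : ℝ} (hx : 0 < x) : x ^ 2 / (1 + x ^ 2) < gM x := by
  have hl := mills_lower x
  have hp := phi_pos x
  unfold gM
  rw [div_lt_iff₀ (one_add_sq_pos x)] at hl
  rw [div_lt_div_iff₀ (one_add_sq_pos x) hp]
  nlinarith

lemma tendsto_gM : Tendsto gM atTop (nhds 1) := by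
  have hlow : Tendsto (fun x : ℝ => x ^ 2 / (1 + x ^ 2)) atTop (nhds 1) := by
    have h1 : Tendsto (fun x : ℝ => 1 / (1 + x ^ 2)) atTop (nhds 0) := by
      apply Tendsto.div_atTop tendsto_const_nhds
      exact tendsto_atTop_add_const_left _ 1 (tendsto_pow_atTop (by norm_num))
    have : Tendsto (fun x : ℝ => 1 - 1 / (1 + x ^ 2)) atTop (nhds (1 - 0)) :=
      (tendsto_const_nhds (x := (1:ℝ))).sub h1
    rw [sub_zero] at this
    refine this.congr' ?_
    filter_upwards [eventually_gt_atTop (0:ℝ)] with x hx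
    field_simp; ring
  refine tendsto_of_tendsto_of_tendsto_of_le_of_le' hlow tendsto_const_nhds ?_ ?_
  · filter_upwards [eventually_gt_atTop (0:ℝ)] with x hx using (lt_gM hx).le
  · filter_upwards [eventually_gt_atTop (0:ℝ)] with x hx using (gM_lt_one hx).le

lemma tendsto_inv_gM : Tendsto (fun x => 1 / gM x) atTop (nhds 1) := by
  have := tendsto_gM.inv₀ one_ne_zero
  simpa [one_div] using this

lemma strictMono_Phi : StrictMono Phi :=
  strictMono_of_deriv_pos fun x => by rw [(hasDerivAt_Phi x).deriv]; exact phi_pos x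

lemma haz_eq {w t : ℝ} (ht : 0 < t) : w / t * Haz t = w * (1 / gM t) := by
  have hp := phi_pos t
  have h1 := one_sub_Phi_pos t
  unfold Haz gM
  field_simp

theorem stmt4 (α β τQ : ℝ) (hα : α ∈ Set.Ioo (0 : ℝ) 1) (hβ : β ∈ Set.Ioo (0 : ℝ) 1)
    (hτ : 0 < τQ)
    (c : ℝ) (hc : c = α * β + (1 - α) * (1 - β))
    (σα : ℝ → ℝ) (hσα : ∀ σZ, σα σZ = Real.sqrt (α ^ 2 + (1 - α) ^ 2 + σZ ^ 2)) :
    StrictAntiOn (fun σZ => α / σα σZ * Haz (τQ * σα σZ / c)) (Set.Ici 0) ∧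
    Tendsto (fun σZ => α / σα σZ * Haz (τQ * σα σZ / c)) atTop (nhds (α * τQ / c)) ∧
    StrictAntiOn (fun σZ => (1 - α) / σα σZ * Haz (τQ * σα σZ / c)) (Set.Ici 0) ∧
    Tendsto (fun σZ => (1 - α) / σα σZ * Haz (τQ * σα σZ / c)) atTop
      (nhds ((1 - α) * τQ / c)) ∧
    StrictAntiOn (fun σZ => 1 - Phi (τQ * σα σZ / c)) (Set.Ici 0) := by
  obtain ⟨hα0, hα1⟩ := hα
  obtain ⟨hβ0, hβ1⟩ := hβ
  have hc0 : 0 < c := by rw [hc]; nlinarith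
  have hk0 : 0 < α ^ 2 + (1 - α) ^ 2 := by nlinarith
  have hσpos : ∀ σZ, 0 < σα σZ := fun σZ => by
    rw [hσα]; exact Real.sqrt_pos.2 (by positivity)
  have ht_pos : ∀ σZ, 0 < τQ * σα σZ / c := fun σZ => by
    have := hσpos σZ; positivity
  have hσmono : StrictMonoOn σα (Set.Ici 0) := by
    intro a ha b hb hab
    rw [hσα, hσα]
    apply Real.sqrt_lt_sqrt (by positivity)
    have ha' : (0:ℝ) ≤ a := ha
    nlinarith
  have htmono : StrictMonoOn (fun σZ => τQ * σα σZ / c) (Set.Ici 0) := by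
    intro a ha b hb hab
    have := hσmono ha hb hab
    have h1 : τQ * σα a < τQ * σα b := by nlinarith
    exact div_lt_div_of_pos_right h1 hc0
  have hσtop : Tendsto σα atTop atTop := by
    refine tendsto_atTop_mono' atTop ?_ tendsto_id
    filter_upwards [eventually_ge_atTop (0:ℝ)] with x hx
    rw [hσα]
    calc (id x : ℝ) = Real.sqrt (x ^ 2) := by
          rw [Real.sqrt_sq hx]; rfl
      _ ≤ _ := Real.sqrt_le_sqrt (by nlinarith)
  have httop : Tendsto (fun σZ => τQ * σα σZ / c) atTop atTop :=
    Tendsto.atTop_div_const hc0 (hσtop.const_mul_atTop hτ)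
  have heq : ∀ (w σZ : ℝ), w / σα σZ * Haz (τQ * σα σZ / c)
      = (w * τQ / c) * (1 / gM (τQ * σα σZ / c)) := by
    intro w σZ
    rw [← haz_eq (ht_pos σZ)]
    congr 1
    have h1 := (hσpos σZ).ne'
    field_simp
  have hanti : ∀ w : ℝ, 0 < w →
      StrictAntiOn (fun σZ => w / σα σZ * Haz (τQ * σα σZ / c)) (Set.Ici 0) := by
    intro w hw a ha b hb hab
    simp only [heq]
    have hgab : gM (τQ * σα a / c) < gM (τQ * σα b / c) :=
      strictMono_gM (htmono ha hb hab)
    have h1 : 1 / gM (τQ * σα b / c) < 1 / gM (τQ * σα a / c) :=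
      one_div_lt_one_div_of_lt (gM_pos (ht_pos a)) hgab
    have hwc : 0 < w * τQ / c := by positivity
    exact mul_lt_mul_of_pos_left h1 hwc
  have hlim : ∀ w : ℝ, Tendsto (fun σZ => w / σα σZ * Haz (τQ * σα σZ / c)) atTop
      (nhds (w * τQ / c)) := by
    intro w
    have := (tendsto_inv_gM.comp httop).const_mul (w * τQ / c)
    rw [mul_one] at this
    exact this.congr fun σZ => (heq w σZ).symm
  refine ⟨hanti α hα0, hlim α, hanti (1 - α) (by linarith), hlim (1 - α), ?_⟩
  intro a ha b hb hab
  have := strictMono_Phi (htmono ha hb hab)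
  simp only
  linarith
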